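/- Let n be a positive integer. For every h ∈ (p₁, 0), the ratio of Abelian integrals satisfies the strict bounds 2(n+1)(n+2)/(3n+4) < A_n(h)/A_0(h) < n+1. -/

import Mathlib

open Real Filter Topology Set MeasureTheory intervalIntegral

lemma mul_sqrt_hasDerivAt' {g : ℝ → ℝ} {g' : ℝ} {x : ℝ}
    (hg : HasDerivAt g g' x) :
    HasDerivAt (fun y => g y * Real.sqrt (g y)) ((3/2) * Real.sqrt (g x) * g') x := by
  rcases lt_trichotomy (g x) 0 with h | h | h
  · have hev : ∀ᶠ y in 𝓝 x, g y < 0 := hg.continuousAt.eventually_lt_const h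
    have h0 : Real.sqrt (g x) = 0 := Real.sqrt_eq_zero_of_nonpos h.le
    rw [h0]
    have : HasDerivAt (fun _ : ℝ => (0:ℝ)) 0 x := hasDerivAt_const x 0
    have heq : (fun y => g y * Real.sqrt (g y)) =ᶠ[𝓝 x] fun _ => (0:ℝ) := by
      filter_upwards [hev] with y hy
      simp [Real.sqrt_eq_zero_of_nonpos hy.le]
    simpa using this.congr_of_eventuallyEq heq
  · rw [h, Real.sqrt_zero]
    rw [hasDerivAt_iff_tendsto_slope]
    have hgs : Filter.Tendsto (slope g x) (𝓝[≠] x) (𝓝 g') :=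
      hasDerivAt_iff_tendsto_slope.1 hg
    have hsq : Filter.Tendsto (fun y => Real.sqrt (g y)) (𝓝[≠] x) (𝓝 0) := by
      have : ContinuousAt (fun y => Real.sqrt (g y)) x :=
        Real.continuous_sqrt.continuousAt.comp hg.continuousAt
      have := this.tendsto
      rw [h, Real.sqrt_zero] at this
      exact this.mono_left nhdsWithin_le_nhds
    have h1 : Filter.Tendsto (fun y => slope g x y * Real.sqrt (g y)) (𝓝[≠] x) (𝓝 (g' * 0)) :=
      hgs.mul hsq
    simp only [mul_zero] at h1
    have h2 : Filter.Tendsto (slope (fun y => g y * Real.sqrt (g y)) x) (𝓝[≠] x) (𝓝 0) := by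
      refine h1.congr' ?_
      filter_upwards [self_mem_nhdsWithin] with y hy
      simp only [slope, vsub_eq_sub, h, Real.sqrt_zero, mul_zero, sub_zero, smul_eq_mul]
      ring
    simpa using h2
  · have hx : g x ≠ 0 := ne_of_gt h
    have hsq := (Real.hasDerivAt_sqrt hx).comp x hg
    have := hg.mul hsq
    refine this.congr_deriv ?_
    have hs : Real.sqrt (g x) ^ 2 = g x := Real.sq_sqrt h.le
    have hsne : Real.sqrt (g x) ≠ 0 := ne_of_gt (Real.sqrt_pos.2 h)
    field_simp
    simp only [Function.comp_apply]
    linear_combination (-1)*g'*hs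

set_option maxHeartbeats 2000000 in
theorem stmt_14 (n : ℕ) (hn : 1 ≤ n) (Φ : ℝ → ℝ)
    (hΦ : ∀ u : ℝ, Φ u = -u ^ 2 / 2 + u ^ (n + 2) / (((n : ℝ) + 1) * ((n : ℝ) + 2)))
    (a B p₁ : ℝ) (ha : a = ((n : ℝ) + 1) ^ ((1 : ℝ) / n))
    (hB : B = (((n : ℝ) + 1) * ((n : ℝ) + 2) / 2) ^ ((1 : ℝ) / n))
    (hp₁ : p₁ = -(n : ℝ) * ((n : ℝ) + 1) ^ ((2 : ℝ) / n) / (2 * ((n : ℝ) + 2)))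
    (α β : ℝ → ℝ)
    (hα : ∀ h ∈ Set.Ioo p₁ (0 : ℝ), α h ∈ Set.Ioo (0 : ℝ) a ∧ Φ (α h) = h)
    (hβ : ∀ h ∈ Set.Ioo p₁ (0 : ℝ), β h ∈ Set.Ioo a B ∧ Φ (β h) = h)
    (A : ℕ → ℝ → ℝ)
    (hA : ∀ (m : ℕ) (h : ℝ),
      A m h = 2 * ∫ u in (α h)..(β h), u ^ m * Real.sqrt (2 * (h - Φ u))) :
    ∀ h ∈ Set.Ioo p₁ (0 : ℝ),
      2 * ((n : ℝ) + 1) * ((n : ℝ) + 2) / (3 * (n : ℝ) + 4) < A n h / A 0 h ∧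
      A n h / A 0 h < (n : ℝ) + 1 := by
  intro h hh
  have hn0 : (n:ℝ) ≠ 0 := Nat.cast_ne_zero.2 (by omega)
  have hn1 : (0:ℝ) < (n:ℝ) + 1 := by positivity
  have hn2 : (0:ℝ) < (n:ℝ) + 2 := by positivity
  have hapos : 0 < a := ha ▸ Real.rpow_pos_of_pos hn1 _
  have han : a ^ n = (n:ℝ) + 1 := by
    rw [ha, ← Real.rpow_natCast (((n : ℝ) + 1) ^ ((1 : ℝ) / n)) n, ← Real.rpow_mul hn1.le]
    rw [one_div, inv_mul_cancel₀ hn0, Real.rpow_one]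
  have hΦd : ∀ u : ℝ, HasDerivAt Φ (-u + u ^ (n+1) / ((n:ℝ)+1)) u := by
    intro u
    have hfe : Φ = fun u : ℝ => -u ^ 2 / 2 + u ^ (n + 2) / (((n : ℝ) + 1) * ((n : ℝ) + 2)) :=
      funext hΦ
    rw [hfe]
    have h1 : HasDerivAt (fun u : ℝ => u ^ 2) (2 * u) u := by
      simpa using hasDerivAt_pow 2 u
    have h2 : HasDerivAt (fun u : ℝ => u ^ (n+2)) ((n+2 : ℕ) * u ^ (n+1)) u := by
      simpa using hasDerivAt_pow (n+2) u
    have := ((h1.neg.div_const 2).add (h2.div_const (((n : ℝ) + 1) * ((n : ℝ) + 2))))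
    refine this.congr_deriv ?_
    push_cast
    field_simp
  have hΦc : Continuous Φ := by
    have hfe : Φ = fun u : ℝ => -u ^ 2 / 2 + u ^ (n + 2) / (((n : ℝ) + 1) * ((n : ℝ) + 2)) :=
      funext hΦ
    rw [hfe]; continuity
  -- endpoints
  obtain ⟨hαmem, hΦα⟩ := hα h hh
  obtain ⟨hβmem, hΦβ⟩ := hβ h hh
  obtain ⟨hα0, hαa⟩ := hαmem
  obtain ⟨haβ, hβB⟩ := hβmem
  have hαβ : α h < β h := hαa.trans haβ
  have hβ0 : 0 < β h := hapos.trans haβ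
  -- Φ < h on the open interval
  have hanti : StrictAntiOn Φ (Set.Icc 0 a) := by
    apply strictAntiOn_of_deriv_neg (convex_Icc 0 a) hΦc.continuousOn
    intro u hu
    rw [interior_Icc] at hu
    rw [(hΦd u).deriv]
    have hun : u ^ n < (n:ℝ) + 1 := han ▸ pow_lt_pow_left₀ hu.2 hu.1.le (by omega)
    have hsucc : u ^ (n+1) = u ^ n * u := pow_succ u n
    rw [hsucc]
    have h2 : u ^ n * u / ((n:ℝ)+1) < u := by
      rw [div_lt_iff₀ hn1]
      nlinarith [hu.1]
    linarith
  have hmono : StrictMonoOn Φ (Set.Icc a (β h)) := by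
    apply strictMonoOn_of_deriv_pos (convex_Icc a (β h)) hΦc.continuousOn
    intro u hu
    rw [interior_Icc] at hu
    rw [(hΦd u).deriv]
    have hun : (n:ℝ) + 1 < u ^ n := han ▸ pow_lt_pow_left₀ hu.1 hapos.le (by omega)
    have hsucc : u ^ (n+1) = u ^ n * u := pow_succ u n
    rw [hsucc]
    have hu0 : 0 < u := hapos.trans hu.1
    have h2 : u < u ^ n * u / ((n:ℝ)+1) := by
      rw [lt_div_iff₀ hn1]
      nlinarith
    linarith
  have hΦlt : ∀ u ∈ Set.Ioo (α h) (β h), Φ u < h := by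
    intro u hu
    rcases le_or_gt u a with hua | hua
    · have := hanti ⟨hα0.le, hαa.le⟩ ⟨(hα0.trans hu.1).le, hua⟩ hu.1
      rwa [hΦα] at this
    · have := hmono ⟨hua.le, hu.2.le⟩ ⟨haβ.le, le_refl _⟩ hu.2
      rwa [hΦβ] at this
  -- the function g
  obtain ⟨g, hgdef⟩ : ∃ g : ℝ → ℝ, g = fun u => 2 * (h - Φ u) := ⟨_, rfl⟩
  have hgc : Continuous g := by
    rw [hgdef]
    exact continuous_const.mul (continuous_const.sub hΦc)
  have hgα : g (α h) = 0 := by rw [hgdef]; simp [hΦα]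
  have hgβ : g (β h) = 0 := by rw [hgdef]; simp [hΦβ]
  have hgpos : ∀ u ∈ Set.Ioo (α h) (β h), 0 < g u := by
    intro u hu
    rw [hgdef]
    have := hΦlt u hu
    simp only []
    linarith
  have hgd : ∀ u : ℝ, HasDerivAt g (2 * u - 2 * u ^ (n+1) / ((n:ℝ)+1)) u := by
    intro u
    rw [hgdef]
    have := ((hΦd u).const_sub h).const_mul 2
    refine this.congr_deriv ?_
    field_simp
    ring
  -- integrands and integrability
  have hIcc : ∀ u ∈ Set.Icc (α h) (β h), 0 < u := fun u hu => lt_of_lt_of_le hα0 hu.1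
  have hc0 : Continuous fun u => Real.sqrt (g u) := Real.continuous_sqrt.comp hgc
  have hcn : Continuous fun u : ℝ => u ^ n * Real.sqrt (g u) :=
    (continuous_pow n).mul hc0
  have huIcc : Set.uIcc (α h) (β h) = Set.Icc (α h) (β h) := Set.uIcc_of_le hαβ.le
  have hne0 : ∀ u ∈ Set.uIcc (α h) (β h), u ≠ 0 := by
    intro u hu; rw [huIcc] at hu; exact (hIcc u hu).ne'
  have hiP : IntervalIntegrable (fun u => Real.sqrt (g u) / u ^ 2) volume (α h) (β h) := by
    apply ContinuousOn.intervalIntegrable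
    apply ContinuousOn.div hc0.continuousOn (continuousOn_pow 2)
    intro u hu
    exact pow_ne_zero 2 (hne0 u hu)
  have hiQ : IntervalIntegrable (fun u => g u * Real.sqrt (g u) / u ^ 2) volume (α h) (β h) := by
    apply ContinuousOn.intervalIntegrable
    apply ContinuousOn.div (hgc.mul hc0).continuousOn (continuousOn_pow 2)
    intro u hu
    exact pow_ne_zero 2 (hne0 u hu)
  have hi0 : IntervalIntegrable (fun u => Real.sqrt (g u)) volume (α h) (β h) :=
    hc0.intervalIntegrable _ _
  have hin : IntervalIntegrable (fun u : ℝ => u ^ n * Real.sqrt (g u)) volume (α h) (β h) :=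
    hcn.intervalIntegrable _ _
  obtain ⟨I0, hI0⟩ : ∃ r : ℝ, r = ∫ u in (α h)..(β h), Real.sqrt (g u) := ⟨_, rfl⟩
  obtain ⟨In, hIn⟩ : ∃ r : ℝ, r = ∫ u in (α h)..(β h), u ^ n * Real.sqrt (g u) := ⟨_, rfl⟩
  obtain ⟨P, hP⟩ : ∃ r : ℝ, r = ∫ u in (α h)..(β h), Real.sqrt (g u) / u ^ 2 := ⟨_, rfl⟩
  obtain ⟨Q, hQ⟩ : ∃ r : ℝ, r = ∫ u in (α h)..(β h), g u * Real.sqrt (g u) / u ^ 2 := ⟨_, rfl⟩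
  -- positivity
  have hI0pos : 0 < I0 := by
    rw [hI0]
    apply intervalIntegral.intervalIntegral_pos_of_pos_on hi0 _ hαβ
    intro u hu
    exact Real.sqrt_pos.2 (hgpos u hu)
  have hPpos : 0 < P := by
    rw [hP]
    apply intervalIntegral.intervalIntegral_pos_of_pos_on hiP _ hαβ
    intro u hu
    have h1 := Real.sqrt_pos.2 (hgpos u hu)
    have h2 : (0:ℝ) < u ^ 2 := pow_pos (hα0.trans hu.1) 2
    exact div_pos h1 h2
  have hQpos : 0 < Q := by
    rw [hQ]
    apply intervalIntegral.intervalIntegral_pos_of_pos_on hiQ _ hαβ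
    intro u hu
    have h1 := Real.sqrt_pos.2 (hgpos u hu)
    have h2 : (0:ℝ) < u ^ 2 := pow_pos (hα0.trans hu.1) 2
    exact div_pos (mul_pos (hgpos u hu) h1) h2
  -- identity I (integration by parts / FTC)
  have hiD : IntervalIntegrable
      (fun u => g u * Real.sqrt (g u) / u ^ 2
        - (3 * Real.sqrt (g u) - 3/((n:ℝ)+1) * (u ^ n * Real.sqrt (g u))))
      volume (α h) (β h) :=
    hiQ.sub ((hi0.const_mul 3).sub (hin.const_mul (3/((n:ℝ)+1))))
  have keyI : Q = 3 * I0 - (3 / ((n:ℝ)+1)) * In := by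
    have hderiv : ∀ u ∈ Set.uIcc (α h) (β h),
        HasDerivAt (fun y => -(g y * Real.sqrt (g y) / y))
          (g u * Real.sqrt (g u) / u ^ 2
            - (3 * Real.sqrt (g u) - 3/((n:ℝ)+1) * (u ^ n * Real.sqrt (g u)))) u := by
      intro u hu
      have hu0 : u ≠ 0 := hne0 u hu
      have hW := mul_sqrt_hasDerivAt' (hgd u)
      have hd := (hW.div (hasDerivAt_id u) hu0).neg
      refine hd.congr_deriv ?_
      have hp1 : u ^ (n+1) = u ^ n * u := pow_succ u n
      simp only [id_eq]
      field_simp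
      rw [hp1]
      ring
    have hFTC := intervalIntegral.integral_eq_sub_of_hasDerivAt hderiv hiD
    simp only [hgα, hgβ] at hFTC
    simp only [Real.sqrt_zero, zero_mul, mul_zero, zero_div, neg_zero, sub_zero, sub_self] at hFTC
    rw [intervalIntegral.integral_sub hiQ
        ((hi0.const_mul 3).sub (hin.const_mul (3/((n:ℝ)+1)))),
      intervalIntegral.integral_sub (hi0.const_mul 3) (hin.const_mul (3/((n:ℝ)+1))),
      intervalIntegral.integral_const_mul, intervalIntegral.integral_const_mul] at hFTC
    rw [← hI0, ← hIn, ← hQ] at hFTC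
    linarith
  -- identity II
  have keyII : (-h) * P = (3*(n:ℝ)+4) / (2*((n:ℝ)+1)*((n:ℝ)+2)) * In - I0 := by
    have e1 : (-h) * P = 1/2 * I0 - 1/(((n:ℝ)+1)*((n:ℝ)+2)) * In - 1/2 * Q := by
      rw [hP, ← intervalIntegral.integral_const_mul]
      have hcongr : (∫ u in (α h)..(β h), (-h) * (Real.sqrt (g u) / u ^ 2))
          = ∫ u in (α h)..(β h),
              (1/2 * Real.sqrt (g u) - 1/(((n:ℝ)+1)*((n:ℝ)+2)) * (u ^ n * Real.sqrt (g u))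
                - 1/2 * (g u * Real.sqrt (g u) / u ^ 2)) := by
        apply intervalIntegral.integral_congr
        intro u hu
        have hu0 : u ≠ 0 := hne0 u hu
        have hgu : g u = 2*h + u^2 - 2*u^(n+2)/(((n:ℝ)+1)*((n:ℝ)+2)) := by
          rw [hgdef]
          simp only [hΦ u]
          ring
        have hne1 : ((n:ℝ)+1) ≠ 0 := ne_of_gt hn1
        have hne2 : ((n:ℝ)+2) ≠ 0 := ne_of_gt hn2
        have hp2 : u ^ (n+2) = u ^ n * u^2 := by ring
        rw [hp2] at hgu
        simp only [hgu]
        field_simp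
        ring
      rw [hcongr,
        intervalIntegral.integral_sub
          ((hi0.const_mul (1/2)).sub (hin.const_mul (1/(((n:ℝ)+1)*((n:ℝ)+2)))))
          (hiQ.const_mul (1/2)),
        intervalIntegral.integral_sub (hi0.const_mul (1/2))
          (hin.const_mul (1/(((n:ℝ)+1)*((n:ℝ)+2)))),
        intervalIntegral.integral_const_mul, intervalIntegral.integral_const_mul,
        intervalIntegral.integral_const_mul]
      rw [← hI0, ← hIn, ← hQ]
    rw [e1, keyI]
    field_simp
    ring
  -- conclusion
  have hAn : A n h = 2 * In := by
    rw [hA n h, hIn, hgdef]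
  have hA0 : A 0 h = 2 * I0 := by
    rw [hA 0 h, hI0, hgdef]
    congr 1
    apply intervalIntegral.integral_congr
    intro u _
    simp
  have hratio : A n h / A 0 h = In / I0 := by
    rw [hAn, hA0, mul_div_mul_left _ _ (two_ne_zero)]
  rw [hratio]
  constructor
  · have hhneg : 0 < -h := by linarith [hh.2]
    have hpos := mul_pos hhneg hPpos
    rw [keyII] at hpos
    have hd : I0 < (3*(n:ℝ)+4) / (2*((n:ℝ)+1)*((n:ℝ)+2)) * In := by linarith
    rw [div_mul_eq_mul_div, lt_div_iff₀ (by positivity : (0:ℝ) < 2*((n:ℝ)+1)*((n:ℝ)+2))] at hd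
    rw [div_lt_div_iff₀ (by positivity : (0:ℝ) < 3*(n:ℝ)+4) hI0pos]
    ring_nf at hd ⊢
    linarith
  · rw [div_lt_iff₀ hI0pos]
    have h5 : 3/((n:ℝ)+1) * In < 3 * I0 := by linarith [hQpos, keyI]
    rw [div_mul_eq_mul_div, div_lt_iff₀ hn1] at h5
    ring_nf at h5 ⊢
    linarith
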